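/- Let S be a semigroup satisfying conditions (A), (B), (C), and let Q be the semigroup of ~-classes of Σ. For every a ∈ S there exists x ∈ S with l(x) = r(a); if x, y ∈ S satisfy l(x) = r(a) = l(y), then [x, xa] = [y, ya]; and the resulting map θ: S → Q, aθ = [x, xa] (for any x ∈ S with l(x) = r(a)), is an injective semigroup homomorphism, i.e., S is embedded in Q. -/
import Mathlib


/-- The bicyclic semigroup `𝓑` carried by `ℕ × ℕ`, an element being `(r, l)`;
`(m,n)(p,q) = (m - n + t, q - p + t)` with `t = max n p`. -/
structure Bicyclic where
  r : ℕ
  l : ℕ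

instance : Mul Bicyclic :=
  ⟨fun x y => ⟨x.r + (max x.l y.r - x.l), y.l + (max x.l y.r - y.r)⟩⟩

/-- The inverse `(m,n)⁻¹ = (n,m)` in the bicyclic semigroup. -/
def Bicyclic.inv (x : Bicyclic) : Bicyclic := ⟨x.l, x.r⟩

/-- `T` is a left I-order in the bicyclic semigroup `𝓑`. -/
def IsLeftIOrderBic (T : Set Bicyclic) : Prop :=
  ∀ q : Bicyclic, ∃ a ∈ T, ∃ b ∈ T, q = a.inv * b

/-- `r a`, the first coordinate of `φ a` in `𝓑`. -/
def rr {S : Type*} [Mul S] (φ : S →ₙ* Bicyclic) (a : S) : ℕ := (φ a).r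

/-- `l a`, the second coordinate of `φ a` in `𝓑`. -/
def ll {S : Type*} [Mul S] (φ : S →ₙ* Bicyclic) (a : S) : ℕ := (φ a).l

/-- Condition (A): the image of `φ` is a left I-order in `𝓑`. -/
def CondA {S : Type*} [Mul S] (φ : S →ₙ* Bicyclic) : Prop :=
  IsLeftIOrderBic (Set.range (⇑φ))

/-- Condition (B)(i): if `l x, l y ≥ r a` and `x * a = y * a` then `x = y`. -/
def CondBi {S : Type*} [Mul S] (φ : S →ₙ* Bicyclic) : Prop :=
  ∀ x y a : S, rr φ a ≤ ll φ x → rr φ a ≤ ll φ y → x * a = y * a → x = y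

/-- Condition (B)(ii): if `r x, r y ≥ l a` and `a * x = a * y` then `x = y`. -/
def CondBii {S : Type*} [Mul S] (φ : S →ₙ* Bicyclic) : Prop :=
  ∀ x y a : S, ll φ a ≤ rr φ x → ll φ a ≤ rr φ y → a * x = a * y → x = y

/-- Condition (C): for all `b c` there are `x y` with `x * b = y * c`,
`r x = r y`, `l x = r b - l b + max (l b) (l c)` and
`l y = r c - l c + max (l b) (l c)`. -/
def CondC {S : Type*} [Mul S] (φ : S →ₙ* Bicyclic) : Prop :=
  ∀ b c : S, ∃ x y : S, x * b = y * c ∧ rr φ x = rr φ y ∧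
    ll φ x = rr φ b + (max (ll φ b) (ll φ c) - ll φ b) ∧
    ll φ y = rr φ c + (max (ll φ b) (ll φ c) - ll φ c)

/-- `Σ = {(a,b) ∈ S × S : r a = r b}`. -/
abbrev Sig {S : Type*} [Mul S] (φ : S →ₙ* Bicyclic) : Type _ :=
  {p : S × S // rr φ p.1 = rr φ p.2}

/-- The relation `∼` on pairs: `(a,b) ∼ (c,d)` iff there are `x y` with
`x * a = y * c`, `x * b = y * d`, `l x = r a`, `l y = r c`, `r x = r y`. -/
def simP {S : Type*} [Mul S] (φ : S →ₙ* Bicyclic) (p q : S × S) : Prop :=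
  ∃ x y : S, x * p.1 = y * q.1 ∧ x * p.2 = y * q.2 ∧
    ll φ x = rr φ p.1 ∧ ll φ y = rr φ q.1 ∧ rr φ x = rr φ y

/-- The relation `∼` on `Σ`. -/
def sim {S : Type*} [Mul S] (φ : S →ₙ* Bicyclic) (p q : Sig φ) : Prop :=
  simP φ p.1 q.1

theorem rr_mul {S : Type*} [Mul S] (φ : S →ₙ* Bicyclic) (x a : S) :
    rr φ (x * a) = rr φ x + (max (ll φ x) (rr φ a) - ll φ x) := by
  simp only [rr, ll, map_mul]; rfl

theorem rr_mul_eq {S : Type*} [Mul S] (φ : S →ₙ* Bicyclic) {x a : S}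
    (h : rr φ a ≤ ll φ x) : rr φ (x * a) = rr φ x := by
  have h1 := rr_mul φ x a
  have h2 : max (ll φ x) (rr φ a) = ll φ x := max_eq_left h
  omega

theorem sig_mul_ok {S : Type*} [Mul S] (φ : S →ₙ* Bicyclic) {a b c d x y : S}
    (hab : rr φ a = rr φ b) (hcd : rr φ c = rr φ d)
    (hx : ll φ x = rr φ b + (max (ll φ b) (ll φ c) - ll φ b))
    (hy : ll φ y = rr φ c + (max (ll φ b) (ll φ c) - ll φ c))
    (hr : rr φ x = rr φ y) : rr φ (x * a) = rr φ (y * d) := by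
  have h1 := rr_mul_eq φ (x := x) (a := a)
    (by have := le_max_left (ll φ b) (ll φ c); omega)
  have h2 := rr_mul_eq φ (x := y) (a := d)
    (by have := le_max_right (ll φ b) (ll φ c); omega)
  omega

/-- The set `Q` of `∼`-classes of `Σ`. -/
def QT {S : Type*} [Mul S] (φ : S →ₙ* Bicyclic) : Type _ := Quot (sim φ)

/-- The `∼`-class `[a,b]` of an element of `Σ`. -/
def cls {S : Type*} [Mul S] (φ : S →ₙ* Bicyclic) (p : Sig φ) : QT φ :=
  Quot.mk _ p

/-- Packaging `(a, b)` with `r a = r b` as an element of `Σ`. -/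
def mkSig {S : Type*} [Mul S] (φ : S →ₙ* Bicyclic) (a b : S)
    (h : rr φ a = rr φ b) : Sig φ := ⟨(a, b), h⟩

/-- A chosen witness `x` from condition (C) applied to `b, c`. -/
noncomputable def cx {S : Type*} [Mul S] {φ : S →ₙ* Bicyclic} (hC : CondC φ)
    (b c : S) : S := (hC b c).choose

/-- A chosen witness `y` from condition (C) applied to `b, c`. -/
noncomputable def cy {S : Type*} [Mul S] {φ : S →ₙ* Bicyclic} (hC : CondC φ)
    (b c : S) : S := (hC b c).choose_spec.choose

theorem c_spec {S : Type*} [Mul S] {φ : S →ₙ* Bicyclic} (hC : CondC φ) (b c : S) :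
    cx hC b c * b = cy hC b c * c ∧ rr φ (cx hC b c) = rr φ (cy hC b c) ∧
    ll φ (cx hC b c) = rr φ b + (max (ll φ b) (ll φ c) - ll φ b) ∧
    ll φ (cy hC b c) = rr φ c + (max (ll φ b) (ll φ c) - ll φ c) :=
  (hC b c).choose_spec.choose_spec

/-- Representative-level multiplication: `(a,b) · (c,d) = (x * a, y * d)` where
`x, y` are the witnesses from condition (C) for `b, c`. -/
noncomputable def pairMul {S : Type*} [Mul S] {φ : S →ₙ* Bicyclic} (hC : CondC φ)
    (p q : Sig φ) : Sig φ :=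
  ⟨(cx hC p.1.2 q.1.1 * p.1.1, cy hC p.1.2 q.1.1 * q.1.2),
    sig_mul_ok φ p.2 q.2 (c_spec hC p.1.2 q.1.1).2.2.1
      (c_spec hC p.1.2 q.1.1).2.2.2 (c_spec hC p.1.2 q.1.1).2.1⟩

/-- The multiplication `[a,b][c,d] = [x*a, y*d]` on the set `Q` of `∼`-classes. -/
noncomputable def qmul {S : Type*} [Mul S] {φ : S →ₙ* Bicyclic} (hC : CondC φ)
    (u v : QT φ) : QT φ :=
  cls φ (pairMul hC (Quot.out u) (Quot.out v))

theorem ll_cx_self {S : Type*} [Mul S] {φ : S →ₙ* Bicyclic} (hC : CondC φ)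
    (a : S) : ll φ (cx hC a a) = rr φ a := by
  have h := (c_spec hC a a).2.2.1
  have h2 : max (ll φ a) (ll φ a) = ll φ a := max_self _
  omega

/-- The embedding `θ : S → Q`, `a θ = [x, x*a]` for a chosen `x` with `l x = r a`. -/
noncomputable def theta {S : Type*} [Mul S] {φ : S →ₙ* Bicyclic} (hC : CondC φ)
    (a : S) : QT φ :=
  cls φ ⟨(cx hC a a, cx hC a a * a), (rr_mul_eq φ (ll_cx_self hC a).ge).symm⟩

/-- The inverse `[a,b]⁻¹ = [b,a]` on `Q`. -/
noncomputable def qinv {S : Type*} [Mul S] {φ : S →ₙ* Bicyclic} (u : QT φ) :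
    QT φ :=
  cls φ ⟨((Quot.out u).1.2, (Quot.out u).1.1), (Quot.out u).2.symm⟩

theorem ll_mul {S : Type*} [Mul S] (φ : S →ₙ* Bicyclic) (x a : S) :
    ll φ (x * a) = ll φ a + (max (ll φ x) (rr φ a) - rr φ a) := by
  simp only [rr, ll, map_mul]; rfl

theorem ll_of_eq {S : Type*} [Mul S] (φ : S →ₙ* Bicyclic) {x y : S} (h : x = y) :
    ll φ x = ll φ y := by rw [h]

theorem ll_mul_left {S : Type*} [Mul S] (φ : S →ₙ* Bicyclic) {x a : S}
    (h : ll φ x = rr φ a) : ll φ (x * a) = ll φ a := by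
  have := ll_mul φ x a; omega

theorem ll_mul_ge {S : Type*} [Mul S] (φ : S →ₙ* Bicyclic) {x a : S}
    (h : rr φ a ≤ ll φ x) : ll φ (x * a) = ll φ a + (ll φ x - rr φ a) := by
  have := ll_mul φ x a; omega

theorem sim_refl {S : Type*} [Mul S] {φ : S →ₙ* Bicyclic} (hC : CondC φ)
    (p : Sig φ) : sim φ p p :=
  ⟨cx hC p.1.1 p.1.1, cx hC p.1.1 p.1.1, rfl, rfl, ll_cx_self hC _,
    ll_cx_self hC _, rfl⟩

theorem sim_symm {S : Type*} [Mul S] {φ : S →ₙ* Bicyclic} {p q : Sig φ}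
    (h : sim φ p q) : sim φ q p := by
  obtain ⟨x, y, h1, h2, h3, h4, h5⟩ := h
  exact ⟨y, x, h1.symm, h2.symm, h4, h3, h5.symm⟩

theorem sim_trans {S : Type*} [Semigroup S] {φ : S →ₙ* Bicyclic} (hC : CondC φ)
    {p q e : Sig φ} (h1 : sim φ p q) (h2 : sim φ q e) : sim φ p e := by
  obtain ⟨x, y, hxa, hxb, hllx, hlly, hrxy⟩ := h1
  obtain ⟨u, v, huc, hud, hllu, hllv, hruv⟩ := h2
  obtain ⟨s, t, hst, hrst, hlls, hllt⟩ := hC y u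
  refine ⟨s * x, t * v, ?_, ?_, ?_, ?_, ?_⟩
  · rw [mul_assoc, hxa, ← mul_assoc, hst, mul_assoc, huc, ← mul_assoc]
  · rw [mul_assoc, hxb, ← mul_assoc, hst, mul_assoc, hud, ← mul_assoc]
  · have e1 := ll_mul φ s x
    omega
  · have e1 := ll_mul φ t v
    omega
  · have e1 := rr_mul φ s x
    have e2 := rr_mul φ t v
    omega

theorem eqvGen_sim {S : Type*} [Semigroup S] {φ : S →ₙ* Bicyclic} (hC : CondC φ)
    {p q : Sig φ} (h : Relation.EqvGen (sim φ) p q) : sim φ p q := by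
  induction h with
  | rel _ _ h => exact h
  | refl x => exact sim_refl hC x
  | symm _ _ _ ih => exact sim_symm ih
  | trans _ _ _ _ _ ih1 ih2 => exact sim_trans hC ih1 ih2

theorem theta_indep {S : Type*} [Semigroup S] {φ : S →ₙ* Bicyclic} (hC : CondC φ)
    {a x y : S} (hx : ll φ x = rr φ a) (hy : ll φ y = rr φ a) :
    simP φ (x, x * a) (y, y * a) := by
  obtain ⟨w, w', h1, h2, h3, h4⟩ := hC x y
  refine ⟨w, w', h1, ?_, ?_, ?_, h2⟩
  · rw [← mul_assoc, ← mul_assoc, h1]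
  · show ll φ w = rr φ x
    omega
  · show ll φ w' = rr φ y
    omega

/-- Uniqueness, up to compatible left multipliers, of solutions as in (C). -/
theorem cwit_unique {S : Type*} [Semigroup S] {φ : S →ₙ* Bicyclic}
    (hBi : CondBi φ) (hC : CondC φ) {b c x y x0 y0 : S}
    (h1 : x * b = y * c) (h2 : x0 * b = y0 * c)
    (hx : ll φ x = rr φ b + (max (ll φ b) (ll φ c) - ll φ b))
    (hx0 : ll φ x0 = rr φ b + (max (ll φ b) (ll φ c) - ll φ b))
    (hy : ll φ y = rr φ c + (max (ll φ b) (ll φ c) - ll φ c))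
    (hy0 : ll φ y0 = rr φ c + (max (ll φ b) (ll φ c) - ll φ c))
    (hr : rr φ x = rr φ y) (hr0 : rr φ x0 = rr φ y0) :
    ∃ z z0 : S, z * x = z0 * x0 ∧ z * y = z0 * y0 ∧
      ll φ z = rr φ x ∧ ll φ z0 = rr φ x0 ∧ rr φ z = rr φ z0 := by
  obtain ⟨z, z0, hz, hrz, hllz, hllz0⟩ := hC x x0
  have hllz' : ll φ z = rr φ x := by omega
  have hllz0' : ll φ z0 = rr φ x0 := by omega
  refine ⟨z, z0, hz, ?_, hllz', hllz0', hrz⟩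
  apply hBi (z * y) (z0 * y0) c
  · have e1 := ll_mul φ z y
    omega
  · have e1 := ll_mul φ z0 y0
    omega
  · rw [mul_assoc, ← h1, ← mul_assoc, hz, mul_assoc, h2, ← mul_assoc]

/-- Core computation for well-definedness, with plain variables. -/
theorem pairMul_wd_aux {S : Type*} [Semigroup S] {φ : S →ₙ* Bicyclic}
    (hBi : CondBi φ) (hC : CondC φ) {a b c d a' b' c' d' x y x' y' : S}
    (hab : rr φ a = rr φ b) (hab' : rr φ a' = rr φ b')
    (hcd : rr φ c = rr φ d) (hcd' : rr φ c' = rr φ d')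
    (hp : simP φ (a, b) (a', b')) (hq : simP φ (c, d) (c', d'))
    (hxy : x * b = y * c) (hrxy : rr φ x = rr φ y)
    (hllx : ll φ x = rr φ b + (max (ll φ b) (ll φ c) - ll φ b))
    (hlly : ll φ y = rr φ c + (max (ll φ b) (ll φ c) - ll φ c))
    (hxy' : x' * b' = y' * c') (hrxy' : rr φ x' = rr φ y')
    (hllx' : ll φ x' = rr φ b' + (max (ll φ b') (ll φ c') - ll φ b'))
    (hlly' : ll φ y' = rr φ c' + (max (ll φ b') (ll φ c') - ll φ c')) :
    simP φ (x * a, y * d) (x' * a', y' * d') := by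
  obtain ⟨s, t, hsa, hsb, hlls, hllt, hrst⟩ := hp
  obtain ⟨u, v, huc, hud, hllu, hllv, hruv⟩ := hq
  simp only at hsa hsb hlls hllt huc hud hllu hllv
  have hsb_l : ll φ (s * b) = ll φ b := ll_mul_left φ (hlls.trans hab)
  have hsb_r : rr φ (s * b) = rr φ s := rr_mul_eq φ (hlls.trans hab).ge
  have htb_l : ll φ (t * b') = ll φ b' := ll_mul_left φ (hllt.trans hab')
  have htb_r : rr φ (t * b') = rr φ t := rr_mul_eq φ (hllt.trans hab').ge
  have huc_l : ll φ (u * c) = ll φ c := ll_mul_left φ hllu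
  have huc_r : rr φ (u * c) = rr φ u := rr_mul_eq φ hllu.ge
  have hvc_l : ll φ (v * c') = ll φ c' := ll_mul_left φ hllv
  have hvc_r : rr φ (v * c') = rr φ v := rr_mul_eq φ hllv.ge
  have hbb' : ll φ b = ll φ b' := by rw [← hsb_l, ← htb_l, hsb]
  have hcc' : ll φ c = ll φ c' := by rw [← huc_l, ← hvc_l, huc]
  -- apply (C) to `s*b` and `u*c`
  obtain ⟨X, Y, hXY, hrXY, hllX0, hllY0⟩ := hC (s * b) (u * c)
  simp only [hsb_l, hsb_r, huc_l, huc_r] at hllX0 hllY0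
  -- `(X*s, Y*u)` is a (C)-type solution for `(b, c)`
  have hE1 : (X * s) * b = (Y * u) * c := by
    rw [mul_assoc, hXY, mul_assoc]
  have hXs_l : ll φ (X * s) = rr φ b + (max (ll φ b) (ll φ c) - ll φ b) := by
    have := ll_mul_ge φ (show rr φ s ≤ ll φ X by omega)
    omega
  have hXs_r : rr φ (X * s) = rr φ X :=
    rr_mul_eq φ (show rr φ s ≤ ll φ X by omega)
  have hYu_l : ll φ (Y * u) = rr φ c + (max (ll φ b) (ll φ c) - ll φ c) := by
    have := ll_mul_ge φ (show rr φ u ≤ ll φ Y by omega)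
    omega
  have hYu_r : rr φ (Y * u) = rr φ Y :=
    rr_mul_eq φ (show rr φ u ≤ ll φ Y by omega)
  obtain ⟨z, z0, hz1, hz2, hllz, hllz0, hrz⟩ :=
    cwit_unique hBi hC hxy hE1 hllx hXs_l hlly hYu_l hrxy (by omega)
  -- `(X*t, Y*v)` is a (C)-type solution for `(b', c')`
  have hE1' : (X * t) * b' = (Y * v) * c' := by
    rw [mul_assoc, ← hsb, hXY, mul_assoc, ← huc]
  have hXt_l : ll φ (X * t) = rr φ b' + (max (ll φ b') (ll φ c') - ll φ b') := by
    have := ll_mul_ge φ (show rr φ t ≤ ll φ X by omega)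
    omega
  have hXt_r : rr φ (X * t) = rr φ X :=
    rr_mul_eq φ (show rr φ t ≤ ll φ X by omega)
  have hYv_l : ll φ (Y * v) = rr φ c' + (max (ll φ b') (ll φ c') - ll φ c') := by
    have := ll_mul_ge φ (show rr φ v ≤ ll φ Y by omega)
    omega
  have hYv_r : rr φ (Y * v) = rr φ Y :=
    rr_mul_eq φ (show rr φ v ≤ ll φ Y by omega)
  obtain ⟨z', z0', hz1', hz2', hllz', hllz0', hrz'⟩ :=
    cwit_unique hBi hC hxy' hE1' hllx' hXt_l hlly' hYv_l hrxy' (by omega)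
  -- glue `z0` and `z0'`
  have hllzz : ll φ z0 = ll φ z0' := by omega
  obtain ⟨g, g', hg, hrg, hllg0, hllg0'⟩ := hC z0 z0'
  have hllg : ll φ g = rr φ z0 := by omega
  have hllg' : ll φ g' = rr φ z0' := by omega
  clear hllg0 hllg0'
  -- key rearrangements
  have k1 : z * (x * a) = z0 * (X * (s * a)) := by
    rw [← mul_assoc, hz1, mul_assoc, mul_assoc]
  have k1' : z' * (x' * a') = z0' * (X * (t * a')) := by
    rw [← mul_assoc, hz1', mul_assoc, mul_assoc]
  have k2 : z * (y * d) = z0 * (Y * (u * d)) := by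
    rw [← mul_assoc, hz2, mul_assoc, mul_assoc]
  have k2' : z' * (y' * d') = z0' * (Y * (v * d')) := by
    rw [← mul_assoc, hz2', mul_assoc, mul_assoc]
  refine ⟨g * z, g' * z', ?_, ?_, ?_, ?_, ?_⟩
  · show (g * z) * (x * a) = (g' * z') * (x' * a')
    rw [mul_assoc, k1, mul_assoc g' z', k1', hsa, ← mul_assoc, ← mul_assoc, hg]
    simp only [mul_assoc]
  · show (g * z) * (y * d) = (g' * z') * (y' * d')
    rw [mul_assoc, k2, mul_assoc g' z', k2', hud, ← mul_assoc, ← mul_assoc, hg]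
    simp only [mul_assoc]
  · show ll φ (g * z) = rr φ (x * a)
    have e1 := ll_mul_left φ (show ll φ g = rr φ z by omega)
    have e2 := rr_mul_eq φ (show rr φ a ≤ ll φ x by omega)
    omega
  · show ll φ (g' * z') = rr φ (x' * a')
    have e1 := ll_mul_left φ (show ll φ g' = rr φ z' by omega)
    have e2 := rr_mul_eq φ (show rr φ a' ≤ ll φ x' by omega)
    omega
  · show rr φ (g * z) = rr φ (g' * z')
    have e1 := rr_mul_eq φ (show rr φ z ≤ ll φ g by omega)
    have e2 := rr_mul_eq φ (show rr φ z' ≤ ll φ g' by omega)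
    omega

/-- The multiplication on `Q` is well defined. -/
theorem pairMul_wd {S : Type*} [Semigroup S] {φ : S →ₙ* Bicyclic}
    (hBi : CondBi φ) (hC : CondC φ) {p p' q q' : Sig φ}
    (hp : sim φ p p') (hq : sim φ q q') :
    sim φ (pairMul hC p q) (pairMul hC p' q') := by
  obtain ⟨h1, h2, h3, h4⟩ := c_spec hC p.1.2 q.1.1
  obtain ⟨h1', h2', h3', h4'⟩ := c_spec hC p'.1.2 q'.1.1
  exact pairMul_wd_aux hBi hC p.2 p'.2 q.2 q'.2 hp hq h1 h2 h3 h4 h1' h2' h3' h4'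

/-- Core computation for the homomorphism property, with plain variables. -/
theorem theta_mul_aux {S : Type*} [Semigroup S] {φ : S →ₙ* Bicyclic} (hC : CondC φ)
    {a b xa xb X Y h : S} (hxa : ll φ xa = rr φ a) (hxb : ll φ xb = rr φ b)
    (hh : ll φ h = rr φ (a * b))
    (hXY : X * (xa * a) = Y * xb)
    (hllX : ll φ X = rr φ (xa * a) +
      (max (ll φ (xa * a)) (ll φ xb) - ll φ (xa * a))) :
    simP φ (X * xa, Y * (xb * b)) (h, h * (a * b)) := by
  have key : (X * xa) * (a * b) = Y * (xb * b) := by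
    rw [← mul_assoc, mul_assoc X, hXY, mul_assoc]
  have hthis : ll φ (X * xa) = rr φ (a * b) := by
    have e1 := ll_mul φ X xa
    have e2 := ll_mul φ xa a
    have e3 := rr_mul φ xa a
    have e4 := rr_mul φ a b
    omega
  obtain ⟨w, w', f1, f2, f3, f4, f5⟩ := theta_indep hC (a := a * b) hthis hh
  exact ⟨w, w', f1, by rw [← key]; exact f2, f3, f4, f5⟩

/-- The map `θ : S → Q`, `a θ = [x, x*a]` (any `x` with `l x = r a`), is a
well-defined injective semigroup homomorphism embedding `S` in `Q`. -/
theorem stmt12 {S : Type*} [Semigroup S] (φ : S →ₙ* Bicyclic)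
    (hA : CondA φ) (hBi : CondBi φ) (hBii : CondBii φ) (hC : CondC φ) :
    (∀ a : S, ∃ x : S, ll φ x = rr φ a) ∧
    (∀ (a x y : S) (hx : ll φ x = rr φ a) (hy : ll φ y = rr φ a),
      cls φ (mkSig φ x (x * a) (rr_mul_eq φ hx.ge).symm) =
        cls φ (mkSig φ y (y * a) (rr_mul_eq φ hy.ge).symm)) ∧
    Function.Injective (theta hC) ∧
    (∀ a b : S, theta hC (a * b) = qmul hC (theta hC a) (theta hC b)) := by
  refine ⟨fun a => ⟨cx hC a a, ll_cx_self hC a⟩, ?_, ?_, ?_⟩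
  · intro a x y hx hy
    exact Quot.sound (theta_indep hC hx hy)
  · intro a b h
    have h' : sim φ
        ⟨(cx hC a a, cx hC a a * a), (rr_mul_eq φ (ll_cx_self hC a).ge).symm⟩
        ⟨(cx hC b b, cx hC b b * b), (rr_mul_eq φ (ll_cx_self hC b).ge).symm⟩ :=
      eqvGen_sim hC (Quot.eqvGen_exact h)
    obtain ⟨u, v, h1, h2, h3, h4, h5⟩ := h'
    simp only at h1 h2 h3 h4
    have hxa := ll_cx_self hC a
    have hxb := ll_cx_self hC b
    have e0 := ll_of_eq φ h1
    have e1 := ll_mul φ u (cx hC a a)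
    have e2 := ll_mul φ v (cx hC b b)
    have hrab : rr φ a = rr φ b := by omega
    have hw : (u * cx hC a a) * a = (u * cx hC a a) * b := by
      rw [mul_assoc, h2, ← mul_assoc, ← h1]
    exact hBii a b (u * cx hC a a) (by omega) (by omega) hw
  · intro a b
    have pa_out : sim φ (Quot.out (theta hC a))
        ⟨(cx hC a a, cx hC a a * a), (rr_mul_eq φ (ll_cx_self hC a).ge).symm⟩ :=
      eqvGen_sim hC (Quot.eqvGen_exact (Quot.out_eq _))
    have pb_out : sim φ (Quot.out (theta hC b))
        ⟨(cx hC b b, cx hC b b * b), (rr_mul_eq φ (ll_cx_self hC b).ge).symm⟩ :=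
      eqvGen_sim hC (Quot.eqvGen_exact (Quot.out_eq _))
    have step1 : qmul hC (theta hC a) (theta hC b) =
        cls φ (pairMul hC
          ⟨(cx hC a a, cx hC a a * a), (rr_mul_eq φ (ll_cx_self hC a).ge).symm⟩
          ⟨(cx hC b b, cx hC b b * b), (rr_mul_eq φ (ll_cx_self hC b).ge).symm⟩) :=
      Quot.sound (pairMul_wd hBi hC pa_out pb_out)
    obtain ⟨hXY, hrXY, hllX, hllY⟩ := c_spec hC (cx hC a a * a) (cx hC b b)
    have step2 : cls φ (pairMul hC
          ⟨(cx hC a a, cx hC a a * a), (rr_mul_eq φ (ll_cx_self hC a).ge).symm⟩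
          ⟨(cx hC b b, cx hC b b * b), (rr_mul_eq φ (ll_cx_self hC b).ge).symm⟩) =
        theta hC (a * b) :=
      Quot.sound (theta_mul_aux hC (ll_cx_self hC a) (ll_cx_self hC b)
        (ll_cx_self hC (a * b)) hXY hllX)
    exact (step1.trans step2).symm
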